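/- Let f : ℂ² → ℝ be defined by f(x₁+iy₁, x₂+iy₂) = y₁² + y₂². For a finite arrangement 𝒜 of real lines in ℝ² ⊂ ℂ² (complexified), and any ε > 0, the set N_ε = {p ∈ ℂ² \ 𝒜 : f(p) ≤ ε} is a deformation retract (homotopy equivalent subspace) of ℂ² \ 𝒜. -/
import Mathlib

open Complex

noncomputable section ScaleAux

/-- scale the imaginary parts of both coordinates by `u` -/
def scPt (u : ℝ) (p : ℂ × ℂ) : ℂ × ℂ :=
  ((p.1.re : ℂ) + (u * p.1.im : ℝ) * Complex.I,
   (p.2.re : ℂ) + (u * p.2.im : ℝ) * Complex.I)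

lemma scPt_one (p : ℂ × ℂ) : scPt 1 p = p := by
  simp [scPt, Complex.ext_iff]

lemma scPt_fval (u : ℝ) (p : ℂ × ℂ) :
    (scPt u p).1.im ^ 2 + (scPt u p).2.im ^ 2 = u ^ 2 * (p.1.im ^ 2 + p.2.im ^ 2) := by
  simp [scPt]; ring

lemma scPt_cont : Continuous fun x : ℝ × (ℂ × ℂ) => scPt x.1 x.2 := by
  unfold scPt; fun_prop

lemma scPt_mem_iff {u : ℝ} (hu : u ≠ 0) (A B C : ℝ) (p : ℂ × ℂ) :
    (A : ℂ) * (scPt u p).1 + (B : ℂ) * (scPt u p).2 = (C : ℂ) ↔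
      (A : ℂ) * p.1 + (B : ℂ) * p.2 = (C : ℂ) := by
  simp only [scPt, Complex.ext_iff, Complex.add_re, Complex.add_im, Complex.mul_re,
    Complex.mul_im, Complex.ofReal_re, Complex.ofReal_im, Complex.I_re, Complex.I_im]
  constructor <;> rintro ⟨h1, h2⟩ <;> refine ⟨by linarith, ?_⟩
  · have h3 : u * (A * p.1.im + B * p.2.im) = 0 := by linear_combination h2
    have h4 := (mul_eq_zero.mp h3).resolve_left hu
    linear_combination h4
  · linear_combination u * h2

/-- the retraction scaling factor -/
def sfac (ε : ℝ) (p : ℂ × ℂ) : ℝ :=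
  Real.sqrt ε / Real.sqrt (max ε (p.1.im ^ 2 + p.2.im ^ 2))

lemma max_pos {ε : ℝ} (hε : 0 < ε) (p : ℂ × ℂ) :
    0 < max ε (p.1.im ^ 2 + p.2.im ^ 2) := lt_of_lt_of_le hε (le_max_left _ _)

lemma sfac_pos {ε : ℝ} (hε : 0 < ε) (p : ℂ × ℂ) : 0 < sfac ε p :=
  div_pos (Real.sqrt_pos.2 hε) (Real.sqrt_pos.2 (max_pos hε p))

lemma sfac_le_one {ε : ℝ} (hε : 0 < ε) (p : ℂ × ℂ) : sfac ε p ≤ 1 :=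
  div_le_one_of_le₀ (Real.sqrt_le_sqrt (le_max_left _ _))
    (Real.sqrt_nonneg _)

lemma sfac_eq_one {ε : ℝ} (hε : 0 < ε) {p : ℂ × ℂ}
    (h : p.1.im ^ 2 + p.2.im ^ 2 ≤ ε) : sfac ε p = 1 := by
  rw [sfac, max_eq_left h, div_self (Real.sqrt_pos.2 hε).ne']

lemma sfac_sq_le {ε : ℝ} (hε : 0 < ε) (p : ℂ × ℂ) :
    (sfac ε p) ^ 2 * (p.1.im ^ 2 + p.2.im ^ 2) ≤ ε := by
  have hM := max_pos hε p
  rw [sfac, div_pow, Real.sq_sqrt hε.le, Real.sq_sqrt hM.le,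
    div_mul_eq_mul_div, div_le_iff₀ hM]
  nlinarith [le_max_right ε (p.1.im ^ 2 + p.2.im ^ 2)]

lemma sfac_cont {ε : ℝ} (hε : 0 < ε) : Continuous (sfac ε) := by
  apply Continuous.div (by fun_prop) (by fun_prop)
  intro p
  exact (Real.sqrt_pos.2 (max_pos hε p)).ne'

lemma interp_pos {ε : ℝ} (hε : 0 < ε) (p : ℂ × ℂ) {t : ℝ}
    (ht0 : 0 ≤ t) (ht1 : t ≤ 1) : 0 < (1 - t) * sfac ε p + t := by
  nlinarith [sfac_pos hε p, sfac_le_one hε p, mul_nonneg ht0 (sub_nonneg.2 (sfac_le_one hε p))]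

end ScaleAux

/-- Let `𝒜` be the complexification of a finite arrangement of real lines in `ℝ² ⊂ ℂ²`,
and `f(x₁+iy₁, x₂+iy₂) = y₁² + y₂²`. For every `ε > 0`, the tube
`N_ε = {p ∈ ℂ² ∖ 𝒜 : f(p) ≤ ε}` is a deformation retract of `ℂ² ∖ 𝒜`: the inclusion
`N_ε ↪ ℂ² ∖ 𝒜` is a homotopy equivalence. -/
theorem stmt_12 (k : ℕ) (a b c : Fin k → ℝ)
    (hline : ∀ i, (a i, b i) ≠ (0, 0)) (ε : ℝ) (hε : 0 < ε) :
    ∃ h : ContinuousMap.HomotopyEquiv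
      {p : ℂ × ℂ // (¬ ∃ i, (a i : ℂ) * p.1 + (b i : ℂ) * p.2 = (c i : ℂ)) ∧
        p.1.im ^ 2 + p.2.im ^ 2 ≤ ε}
      {p : ℂ × ℂ // ¬ ∃ i, (a i : ℂ) * p.1 + (b i : ℂ) * p.2 = (c i : ℂ)},
      ∀ q, ((h.toFun q : {p : ℂ × ℂ // ¬ ∃ i, (a i : ℂ) * p.1 + (b i : ℂ) * p.2 = (c i : ℂ)}) :
        ℂ × ℂ) = (q : ℂ × ℂ) := by
  classical
  set N := {p : ℂ × ℂ // (¬ ∃ i, (a i : ℂ) * p.1 + (b i : ℂ) * p.2 = (c i : ℂ)) ∧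
      p.1.im ^ 2 + p.2.im ^ 2 ≤ ε} with hN
  set X := {p : ℂ × ℂ // ¬ ∃ i, (a i : ℂ) * p.1 + (b i : ℂ) * p.2 = (c i : ℂ)} with hX
  -- membership is preserved under positive scaling
  have memiff : ∀ {u : ℝ}, u ≠ 0 → ∀ p : ℂ × ℂ,
      ((¬ ∃ i, (a i : ℂ) * (scPt u p).1 + (b i : ℂ) * (scPt u p).2 = (c i : ℂ)) ↔
        (¬ ∃ i, (a i : ℂ) * p.1 + (b i : ℂ) * p.2 = (c i : ℂ))) := by
    intro u hu p
    exact not_congr (exists_congr fun i => scPt_mem_iff hu (a i) (b i) (c i) p)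
  -- the inclusion
  let incl : C(N, X) := ⟨fun q => ⟨q.1, q.2.1⟩, Continuous.subtype_mk continuous_subtype_val _⟩
  -- the retraction
  let r : C(X, N) := ⟨fun q => ⟨scPt (sfac ε q.1) q.1,
      ⟨(memiff (sfac_pos hε q.1).ne' q.1).2 q.2, by
        rw [scPt_fval]; exact sfac_sq_le hε q.1⟩⟩,
    Continuous.subtype_mk (scPt_cont.comp
      (((sfac_cont hε).comp continuous_subtype_val).prodMk continuous_subtype_val)) _⟩
  have hri : r.comp incl = ContinuousMap.id N :=
    ContinuousMap.ext fun q => Subtype.ext (by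
      show (scPt (sfac ε q.1) q.1 : ℂ × ℂ) = q.1
      rw [sfac_eq_one hε q.2.2, scPt_one])
  have Hright : (incl.comp r).Homotopy (ContinuousMap.id X) := by
    refine ⟨⟨fun tq => ⟨scPt ((1 - (tq.1 : ℝ)) * sfac ε tq.2.1 + (tq.1 : ℝ)) tq.2.1,
        (memiff (interp_pos hε tq.2.1 tq.1.2.1 tq.1.2.2).ne' tq.2.1).2 tq.2.2⟩, ?_⟩, ?_, ?_⟩
    · apply Continuous.subtype_mk
      have hc : Continuous fun tq : ↑(Set.Icc (0:ℝ) 1) × X =>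
          (((1 - (tq.1 : ℝ)) * sfac ε tq.2.1 + (tq.1 : ℝ)), (tq.2 : ℂ × ℂ)) := by
        refine Continuous.prodMk ?_ (continuous_subtype_val.comp continuous_snd)
        have h1 : Continuous fun tq : ↑(Set.Icc (0:ℝ) 1) × X => (tq.1 : ℝ) :=
          continuous_subtype_val.comp continuous_fst
        have h2 : Continuous fun tq : ↑(Set.Icc (0:ℝ) 1) × X => sfac ε tq.2.1 :=
          (sfac_cont hε).comp (continuous_subtype_val.comp continuous_snd)
        exact ((continuous_const.sub h1).mul h2).add h1
      exact scPt_cont.comp hc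
    · intro q
      apply Subtype.ext
      show scPt ((1 - (0 : ℝ)) * sfac ε q.1 + 0) q.1 = scPt (sfac ε q.1) q.1
      norm_num
    · intro q
      apply Subtype.ext
      show scPt ((1 - (1 : ℝ)) * sfac ε q.1 + 1) q.1 = q.1
      norm_num [scPt_one]
  refine ⟨⟨incl, r, ?_, ⟨Hright⟩⟩, fun q => rfl⟩
  rw [hri]
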